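/- Let I = {i_1 < ... < i_k} and J = {j_1 < ... < j_k} be two k-element subsets of [n] viewed as one-column tableaux. If I and J are crossing (i.e., not noncrossing), then I and J are not weakly separated. -/

import Mathlib

open Finset

/-- `allLT I J` means `max I < min J` (vacuously true if either set is empty). -/
def allLT (I J : Finset ℕ) : Prop := ∀ i ∈ I, ∀ j ∈ J, i < j

/-- `I` and `J` are weakly separated. -/
def WeaklySeparated (I J : Finset ℕ) : Prop :=
  (∃ I1 I2 : Finset ℕ, Disjoint I1 I2 ∧ I1 ∪ I2 = I \ J ∧
      allLT I1 (J \ I) ∧ allLT (J \ I) I2) ∨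
  (∃ J1 J2 : Finset ℕ, Disjoint J1 J2 ∧ J1 ∪ J2 = J \ I ∧
      allLT J1 (I \ J) ∧ allLT (I \ J) J2)

/-- the set `{i_a, i_{a+1}, ..., i_b}` of entries of `I` in (1-indexed) positions `a` to `b`. -/
def posSlice (I : Finset ℕ) (a b : ℕ) : Finset ℕ :=
  I.filter fun x => a ≤ (I.filter (· ≤ x)).card ∧ (I.filter (· ≤ x)).card ≤ b

/-- the pair of `k`-subsets `I`, `J` is noncrossing. -/
def Noncrossing (k : ℕ) (I J : Finset ℕ) : Prop :=
  ∀ a b : ℕ, 1 ≤ a → a < b → b ≤ k →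
    WeaklySeparated (posSlice I a b) (posSlice J a b) ∨
    posSlice I (a + 1) (b - 1) ≠ posSlice J (a + 1) (b - 1)

/-- the `a`-th smallest entry of `I` (1-indexed). -/
def nth (I : Finset ℕ) (a : ℕ) : ℕ := (I.sort (· ≤ ·)).getD (a - 1) 0

/-- `T` is a rectangular semistandard Young tableau with entries in `[n]`. -/
def IsSSYT {k m : ℕ} (n : ℕ) (T : Fin k → Fin m → ℕ) : Prop :=
  (∀ i j, T i j ∈ Finset.Icc 1 n) ∧
  (∀ i (j j' : Fin m), j ≤ j' → T i j ≤ T i j') ∧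
  (∀ (i i' : Fin k) j, i < i' → T i j < T i' j)


lemma cnt_lt_of_lt {I : Finset ℕ} {x y : ℕ} (hy : y ∈ I) (h : x < y) :
    (I.filter (· ≤ x)).card < (I.filter (· ≤ y)).card := by
  apply card_lt_card
  constructor
  · exact Finset.monotone_filter_right I (fun z _ hz => le_trans hz h.le)
  · intro hsub
    have := hsub (mem_filter.2 ⟨hy, le_refl y⟩)
    simp only [mem_filter] at this
    omega

lemma cnt_orderEmb {k : ℕ} {I : Finset ℕ} (hIc : I.card = k) (c : Fin k) :
    (I.filter (· ≤ I.orderEmbOfFin hIc c)).card = c + 1 := by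
  have himg : I.filter (· ≤ I.orderEmbOfFin hIc c)
      = (Finset.Iic c).image (I.orderEmbOfFin hIc) := by
    ext x
    simp only [mem_filter, mem_image, mem_Iic]
    constructor
    · rintro ⟨hx, hle⟩
      have hr : x ∈ Set.range (I.orderEmbOfFin hIc) := by
        rw [Finset.range_orderEmbOfFin]; exact hx
      obtain ⟨j, rfl⟩ := hr
      exact ⟨j, (I.orderEmbOfFin hIc).le_iff_le.1 hle, rfl⟩
    · rintro ⟨j, hj, rfl⟩
      exact ⟨Finset.orderEmbOfFin_mem _ _ _, (I.orderEmbOfFin hIc).le_iff_le.2 hj⟩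
  rw [himg, card_image_of_injective _ (I.orderEmbOfFin hIc).injective, Fin.card_Iic]

lemma mem_posSlice_orderEmb {k : ℕ} {I : Finset ℕ} (hIc : I.card = k) (a b : ℕ) (c : Fin k) :
    I.orderEmbOfFin hIc c ∈ posSlice I a b ↔ a ≤ c + 1 ∧ c + 1 ≤ b := by
  simp [posSlice, mem_filter, Finset.orderEmbOfFin_mem, cnt_orderEmb hIc c]

lemma posSlice_rep {k : ℕ} {I : Finset ℕ} (hIc : I.card = k) {a b : ℕ} {x : ℕ}
    (hx : x ∈ posSlice I a b) :
    ∃ c : Fin k, x = I.orderEmbOfFin hIc c ∧ a ≤ c + 1 ∧ c + 1 ≤ b := by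
  have hxI : x ∈ I := mem_filter.1 hx |>.1
  have hr : x ∈ Set.range (I.orderEmbOfFin hIc) := by
    rw [Finset.range_orderEmbOfFin]; exact hxI
  obtain ⟨c, rfl⟩ := hr
  exact ⟨c, rfl, (mem_posSlice_orderEmb hIc a b c).1 hx⟩

lemma posSlice_mono {I : Finset ℕ} {a b a' b' : ℕ} (ha : a ≤ a') (hb : b' ≤ b) :
    posSlice I a' b' ⊆ posSlice I a b :=
  Finset.monotone_filter_right I (fun _ _ hz => ⟨le_trans ha hz.1, le_trans hz.2 hb⟩)

lemma ws_symm {A B : Finset ℕ} (h : WeaklySeparated A B) : WeaklySeparated B A := by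
  rcases h with ⟨I1, I2, h1, h2, h3, h4⟩ | ⟨J1, J2, h1, h2, h3, h4⟩
  · exact Or.inr ⟨I1, I2, h1, h2, h3, h4⟩
  · exact Or.inl ⟨J1, J2, h1, h2, h3, h4⟩

lemma ws_of_side (A B : Finset ℕ)
    (h : ∀ x ∈ A \ B, (∀ y ∈ B \ A, x < y) ∨ (∀ y ∈ B \ A, y < x)) :
    WeaklySeparated A B := by
  classical
  left
  refine ⟨(A \ B).filter (fun x => ∀ y ∈ B \ A, x < y),
         (A \ B).filter (fun x => ¬ ∀ y ∈ B \ A, x < y), ?_, ?_, ?_, ?_⟩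
  · exact disjoint_filter_filter_not _ _ _
  · exact filter_union_filter_not_eq _ _
  · intro x hx y hy
    exact (mem_filter.1 hx).2 y hy
  · intro y hy x hx
    obtain ⟨hxAB, hnot⟩ := mem_filter.1 hx
    rcases h x hxAB with h1 | h2
    · exact absurd h1 hnot
    · exact h2 y hy

lemma not_ws_pattern {A B : Finset ℕ} (hnws : ¬ WeaklySeparated A B) :
    (∃ x ∈ A \ B, ∃ y ∈ B \ A, ∃ y' ∈ B \ A, y < x ∧ x < y') ∧
    (∃ y ∈ B \ A, ∃ x ∈ A \ B, ∃ x' ∈ A \ B, x < y ∧ y < x') := by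
  constructor
  · by_contra hc
    push_neg at hc
    apply hnws
    apply ws_of_side
    intro x hx
    by_cases hall : ∀ y ∈ B \ A, x < y
    · exact Or.inl hall
    · right
      push_neg at hall
      obtain ⟨y0, hy0, hy0le⟩ := hall
      intro y' hy'
      have hne : y' ≠ x := by
        intro he; subst he
        exact (mem_sdiff.1 hx).2 (mem_sdiff.1 hy').1
      have hy0lt : y0 < x := by
        have : y0 ≠ x := by
          intro he; subst he; exact (mem_sdiff.1 hx).2 (mem_sdiff.1 hy0).1
        omega
      have := hc x hx y0 hy0 y' hy' hy0lt
      omega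
  · by_contra hc
    push_neg at hc
    apply hnws
    apply ws_symm
    apply ws_of_side
    intro y hy
    by_cases hall : ∀ x ∈ A \ B, y < x
    · exact Or.inl hall
    · right
      push_neg at hall
      obtain ⟨x0, hx0, hx0le⟩ := hall
      intro x' hx'
      have hne : x' ≠ y := by
        intro he; subst he
        exact (mem_sdiff.1 hy).2 (mem_sdiff.1 hx').1
      have hx0lt : x0 < y := by
        have : x0 ≠ y := by
          intro he; subst he; exact (mem_sdiff.1 hy).2 (mem_sdiff.1 hx0).1
        omega
      have := hc y hy x0 hx0 x' hx' hx0lt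
      omega

lemma exists_sdiff_filter {I J : Finset ℕ} (p : ℕ → Prop) [DecidablePred p]
    (h : (J.filter p).card < (I.filter p).card) : ∃ x ∈ I \ J, p x := by
  by_contra hc
  push_neg at hc
  have hsub : I.filter p ⊆ J.filter p := by
    intro z hz
    obtain ⟨hzI, hpz⟩ := mem_filter.1 hz
    refine mem_filter.2 ⟨?_, hpz⟩
    by_contra hzJ
    exact hc z (mem_sdiff.2 ⟨hzI, hzJ⟩) hpz
  exact absurd (card_le_card hsub) (by omega)

lemma key_not_ws {I J : Finset ℕ} {ja ib : ℕ}
    (hja : ja ∈ J \ I) (hib : ib ∈ I \ J) (hlt : ja < ib)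
    (hx1 : ∃ x ∈ I \ J, x < ja) (hy2 : ∃ y ∈ J \ I, ib < y) :
    ¬ WeaklySeparated I J := by
  obtain ⟨x1, hx1m, hx1lt⟩ := hx1
  obtain ⟨y2, hy2m, hy2gt⟩ := hy2
  rintro (⟨I1, I2, _, hu, hl1, hl2⟩ | ⟨J1, J2, _, hu, hl1, hl2⟩)
  · have hmem : ib ∈ I1 ∪ I2 := by rw [hu]; exact hib
    rcases mem_union.1 hmem with h | h
    · have := hl1 ib h ja hja; omega
    · have := hl2 y2 hy2m ib h; omega
  · have hmem : ja ∈ J1 ∪ J2 := by rw [hu]; exact hja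
    rcases mem_union.1 hmem with h | h
    · have := hl1 ja h x1 hx1m; omega
    · have := hl2 ib hib ja h; omega

lemma key_alt {k : ℕ} {I J : Finset ℕ} (hIc : I.card = k) (hJc : J.card = k)
    {a b : ℕ} (ha : 1 ≤ a) (hab : a < b) (hb : b ≤ k)
    (hak : a - 1 < k) (hbk : b - 1 < k)
    (h1 : I.orderEmbOfFin hIc ⟨a-1, hak⟩ < J.orderEmbOfFin hJc ⟨a-1, hak⟩)
    (h2 : J.orderEmbOfFin hJc ⟨a-1, hak⟩ < I.orderEmbOfFin hIc ⟨b-1, hbk⟩)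
    (h3 : I.orderEmbOfFin hIc ⟨b-1, hbk⟩ < J.orderEmbOfFin hJc ⟨b-1, hbk⟩)
    (hjaI : J.orderEmbOfFin hJc ⟨a-1, hak⟩ ∉ I)
    (hibJ : I.orderEmbOfFin hIc ⟨b-1, hbk⟩ ∉ J) :
    ¬ WeaklySeparated I J := by
  apply key_not_ws (mem_sdiff.2 ⟨Finset.orderEmbOfFin_mem _ _ _, hjaI⟩)
      (mem_sdiff.2 ⟨Finset.orderEmbOfFin_mem _ _ _, hibJ⟩) h2
  · have hcI : (I.filter (· ≤ I.orderEmbOfFin hIc ⟨a-1, hak⟩)).card = (a-1) + 1 :=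
      cnt_orderEmb hIc _
    have hcJ : (J.filter (· ≤ J.orderEmbOfFin hJc ⟨a-1, hak⟩)).card = (a-1) + 1 :=
      cnt_orderEmb hJc _
    have hcJia : (J.filter (· ≤ I.orderEmbOfFin hIc ⟨a-1, hak⟩)).card
        < (J.filter (· ≤ J.orderEmbOfFin hJc ⟨a-1, hak⟩)).card :=
      cnt_lt_of_lt (Finset.orderEmbOfFin_mem J hJc _) h1
    obtain ⟨x, hx, hxle⟩ := exists_sdiff_filter (I := I) (J := J) (· ≤ I.orderEmbOfFin hIc ⟨a-1, hak⟩) (by omega)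
    exact ⟨x, hx, lt_of_le_of_lt hxle h1⟩
  · have hcI : (I.filter (· ≤ I.orderEmbOfFin hIc ⟨b-1, hbk⟩)).card = (b-1) + 1 :=
      cnt_orderEmb hIc _
    have hcJ : (J.filter (· ≤ J.orderEmbOfFin hJc ⟨b-1, hbk⟩)).card = (b-1) + 1 :=
      cnt_orderEmb hJc _
    have hcJib : (J.filter (· ≤ I.orderEmbOfFin hIc ⟨b-1, hbk⟩)).card
        < (J.filter (· ≤ J.orderEmbOfFin hJc ⟨b-1, hbk⟩)).card :=
      cnt_lt_of_lt (Finset.orderEmbOfFin_mem J hJc _) h3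
    have h5 := card_filter_add_card_filter_not
      (s := J) (· ≤ I.orderEmbOfFin hIc ⟨b-1, hbk⟩)
    have h6 := card_filter_add_card_filter_not
      (s := I) (· ≤ I.orderEmbOfFin hIc ⟨b-1, hbk⟩)
    rw [hJc] at h5
    rw [hIc] at h6
    obtain ⟨y, hy, hygt⟩ := exists_sdiff_filter (I := J) (J := I)
      (fun x => ¬ x ≤ I.orderEmbOfFin hIc ⟨b-1, hbk⟩) (by omega)
    exact ⟨y, hy, not_le.1 hygt⟩

lemma ja_notmem {k : ℕ} {I J : Finset ℕ} (hIc : I.card = k) (hJc : J.card = k)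
    {a b : ℕ} (ha : 1 ≤ a) (hab : a < b) (hb : b ≤ k)
    (hak : a - 1 < k) (hbk : b - 1 < k)
    (hmid : posSlice I (a+1) (b-1) = posSlice J (a+1) (b-1))
    (h1 : I.orderEmbOfFin hIc ⟨a-1, hak⟩ < J.orderEmbOfFin hJc ⟨a-1, hak⟩)
    (h2 : J.orderEmbOfFin hJc ⟨a-1, hak⟩ < I.orderEmbOfFin hIc ⟨b-1, hbk⟩) :
    J.orderEmbOfFin hJc ⟨a-1, hak⟩ ∉ I := by
  intro hmem
  have hak2 : a < k := by omega
  have hr : J.orderEmbOfFin hJc ⟨a-1, hak⟩ ∈ Set.range (I.orderEmbOfFin hIc) := by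
    rw [Finset.range_orderEmbOfFin]; exact hmem
  obtain ⟨c, hc⟩ := hr
  by_cases hca : (c : ℕ) ≤ a - 1
  · have hle : I.orderEmbOfFin hIc c ≤ I.orderEmbOfFin hIc ⟨a-1, hak⟩ :=
      (I.orderEmbOfFin hIc).monotone (by exact hca)
    omega
  · have hge : I.orderEmbOfFin hIc ⟨a, hak2⟩ ≤ I.orderEmbOfFin hIc c :=
      (I.orderEmbOfFin hIc).monotone (by simp [Fin.le_def]; omega)
    have hgt : J.orderEmbOfFin hJc ⟨a-1, hak⟩ < I.orderEmbOfFin hIc ⟨a, hak2⟩ := by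
      by_cases hcase : a + 1 ≤ b - 1
      · have hmem2 : I.orderEmbOfFin hIc ⟨a, hak2⟩ ∈ posSlice I (a+1) (b-1) :=
          (mem_posSlice_orderEmb hIc _ _ _).2 ⟨by simp, by simp; omega⟩
        rw [hmid] at hmem2
        obtain ⟨c', he, hc1, hc2⟩ := posSlice_rep hJc hmem2
        have hlt : J.orderEmbOfFin hJc ⟨a-1, hak⟩ < J.orderEmbOfFin hJc c' :=
          (J.orderEmbOfFin hJc).strictMono (by simp [Fin.lt_def]; omega)
        omega
      · have heq : (⟨a, hak2⟩ : Fin k) = ⟨b-1, hbk⟩ := Fin.ext (by simp; omega)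
        rw [heq]; exact h2
    omega

lemma ib_notmem {k : ℕ} {I J : Finset ℕ} (hIc : I.card = k) (hJc : J.card = k)
    {a b : ℕ} (ha : 1 ≤ a) (hab : a < b) (hb : b ≤ k)
    (hak : a - 1 < k) (hbk : b - 1 < k)
    (hmid : posSlice I (a+1) (b-1) = posSlice J (a+1) (b-1))
    (h2 : J.orderEmbOfFin hJc ⟨a-1, hak⟩ < I.orderEmbOfFin hIc ⟨b-1, hbk⟩)
    (h3 : I.orderEmbOfFin hIc ⟨b-1, hbk⟩ < J.orderEmbOfFin hJc ⟨b-1, hbk⟩) :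
    I.orderEmbOfFin hIc ⟨b-1, hbk⟩ ∉ J := by
  intro hmem
  have hbk2 : b - 2 < k := by omega
  have hr : I.orderEmbOfFin hIc ⟨b-1, hbk⟩ ∈ Set.range (J.orderEmbOfFin hJc) := by
    rw [Finset.range_orderEmbOfFin]; exact hmem
  obtain ⟨c, hc⟩ := hr
  by_cases hcb : b - 1 ≤ (c : ℕ)
  · have hle : J.orderEmbOfFin hJc ⟨b-1, hbk⟩ ≤ J.orderEmbOfFin hJc c :=
      (J.orderEmbOfFin hJc).monotone (by simp [Fin.le_def]; omega)
    omega
  · have hge : J.orderEmbOfFin hJc c ≤ J.orderEmbOfFin hJc ⟨b-2, hbk2⟩ :=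
      (J.orderEmbOfFin hJc).monotone (by simp [Fin.le_def]; omega)
    have hgt : J.orderEmbOfFin hJc ⟨b-2, hbk2⟩ < I.orderEmbOfFin hIc ⟨b-1, hbk⟩ := by
      by_cases hcase : a + 1 ≤ b - 1
      · have hmem2 : J.orderEmbOfFin hJc ⟨b-2, hbk2⟩ ∈ posSlice J (a+1) (b-1) :=
          (mem_posSlice_orderEmb hJc _ _ _).2 ⟨by simp; omega, by simp; omega⟩
        rw [← hmid] at hmem2
        obtain ⟨c', he, hc1, hc2⟩ := posSlice_rep hIc hmem2
        have hlt : I.orderEmbOfFin hIc c' < I.orderEmbOfFin hIc ⟨b-1, hbk⟩ :=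
          (I.orderEmbOfFin hIc).strictMono (by simp [Fin.lt_def]; omega)
        omega
      · have heq : (⟨b-2, hbk2⟩ : Fin k) = ⟨a-1, hak⟩ := Fin.ext (by simp; omega)
        rw [heq]; exact h2
    omega

/-- If two `k`-subsets are crossing then they are not weakly separated. -/
theorem crossing_implies_not_weakly_separated
    (n k : ℕ) (I J : Finset ℕ) (hI : I ⊆ Finset.Icc 1 n) (hJ : J ⊆ Finset.Icc 1 n)
    (hIc : I.card = k) (hJc : J.card = k)
    (hcross : ¬ Noncrossing k I J) :
    ¬ WeaklySeparated I J := by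
  unfold Noncrossing at hcross
  push_neg at hcross
  obtain ⟨a, b, ha, hab, hb, hnws, hmid⟩ := hcross
  have hak : a - 1 < k := by omega
  have hbk : b - 1 < k := by omega
  -- elements of the slice differences are endpoints
  have hAB : ∀ x ∈ posSlice I a b \ posSlice J a b,
      x = I.orderEmbOfFin hIc ⟨a-1, hak⟩ ∨ x = I.orderEmbOfFin hIc ⟨b-1, hbk⟩ := by
    intro x hx
    obtain ⟨hxA, hxB⟩ := mem_sdiff.1 hx
    obtain ⟨c, rfl, hc1, hc2⟩ := posSlice_rep hIc hxA
    by_cases hmidc : a + 1 ≤ (c:ℕ) + 1 ∧ (c:ℕ) + 1 ≤ b - 1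
    · exfalso
      have hm : I.orderEmbOfFin hIc c ∈ posSlice I (a+1) (b-1) :=
        (mem_posSlice_orderEmb hIc _ _ _).2 hmidc
      rw [hmid] at hm
      exact hxB (posSlice_mono (by omega) (by omega) hm)
    · have hcc : (c:ℕ) = a - 1 ∨ (c:ℕ) = b - 1 := by omega
      rcases hcc with h | h
      · left; congr 1; exact Fin.ext h
      · right; congr 1; exact Fin.ext h
  have hBA : ∀ y ∈ posSlice J a b \ posSlice I a b,
      y = J.orderEmbOfFin hJc ⟨a-1, hak⟩ ∨ y = J.orderEmbOfFin hJc ⟨b-1, hbk⟩ := by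
    intro y hy
    obtain ⟨hyA, hyB⟩ := mem_sdiff.1 hy
    obtain ⟨c, rfl, hc1, hc2⟩ := posSlice_rep hJc hyA
    by_cases hmidc : a + 1 ≤ (c:ℕ) + 1 ∧ (c:ℕ) + 1 ≤ b - 1
    · exfalso
      have hm : J.orderEmbOfFin hJc c ∈ posSlice J (a+1) (b-1) :=
        (mem_posSlice_orderEmb hJc _ _ _).2 hmidc
      rw [← hmid] at hm
      exact hyB (posSlice_mono (by omega) (by omega) hm)
    · have hcc : (c:ℕ) = a - 1 ∨ (c:ℕ) = b - 1 := by omega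
      rcases hcc with h | h
      · left; congr 1; exact Fin.ext h
      · right; congr 1; exact Fin.ext h
  have hiaib : I.orderEmbOfFin hIc ⟨a-1, hak⟩ < I.orderEmbOfFin hIc ⟨b-1, hbk⟩ :=
    (I.orderEmbOfFin hIc).strictMono (by simp [Fin.lt_def]; omega)
  have hjajb : J.orderEmbOfFin hJc ⟨a-1, hak⟩ < J.orderEmbOfFin hJc ⟨b-1, hbk⟩ :=
    (J.orderEmbOfFin hJc).strictMono (by simp [Fin.lt_def]; omega)
  obtain ⟨⟨x, hxm, y, hym, y', hym', hyx, hxy'⟩, ⟨z, hzm, w, hwm, w', hwm', hwz, hzw'⟩⟩ :=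
    not_ws_pattern hnws
  have hxe := hAB x hxm
  have hye := hBA y hym
  have hye' := hBA y' hym'
  have hze := hBA z hzm
  have hwe := hAB w hwm
  have hwe' := hAB w' hwm'
  -- ja < x < jb
  have h5 : J.orderEmbOfFin hJc ⟨a-1, hak⟩ < x ∧ x < J.orderEmbOfFin hJc ⟨b-1, hbk⟩ := by
    rcases hye with rfl | rfl <;> rcases hye' with h | h <;> subst h <;> omega
  -- ia < z < ib
  have h6 : I.orderEmbOfFin hIc ⟨a-1, hak⟩ < z ∧ z < I.orderEmbOfFin hIc ⟨b-1, hbk⟩ := by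
    rcases hwe with rfl | rfl <;> rcases hwe' with h | h <;> subst h <;> omega
  rcases hxe with rfl | rfl
  · -- x = ia : pattern ja < ia < jb < ib
    have hz2 : z = J.orderEmbOfFin hJc ⟨b-1, hbk⟩ := by
      rcases hze with rfl | rfl
      · omega
      · rfl
    subst hz2
    have hnot1 : I.orderEmbOfFin hIc ⟨a-1, hak⟩ ∉ J :=
      ja_notmem hJc hIc ha hab hb hak hbk hmid.symm (by omega) (by omega)
    have hnot2 : J.orderEmbOfFin hJc ⟨b-1, hbk⟩ ∉ I :=
      ib_notmem hJc hIc ha hab hb hak hbk hmid.symm (by omega) (by omega)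
    intro hws
    exact key_alt hJc hIc ha hab hb hak hbk (by omega) (by omega) (by omega) hnot1 hnot2
      (ws_symm hws)
  · -- x = ib : pattern ia < ja < ib < jb
    have hz2 : z = J.orderEmbOfFin hJc ⟨a-1, hak⟩ := by
      rcases hze with rfl | rfl
      · rfl
      · omega
    subst hz2
    have hnot1 : J.orderEmbOfFin hJc ⟨a-1, hak⟩ ∉ I :=
      ja_notmem hIc hJc ha hab hb hak hbk hmid (by omega) (by omega)
    have hnot2 : I.orderEmbOfFin hIc ⟨b-1, hbk⟩ ∉ J :=
      ib_notmem hIc hJc ha hab hb hak hbk hmid (by omega) (by omega)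
    exact key_alt hIc hJc ha hab hb hak hbk (by omega) (by omega) (by omega) hnot1 hnot2
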